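/- Let f : ℝⁿ → ℝ be twice continuously differentiable with ∇²f Lipschitz continuous with constant L_H in the operator norm. Let μ ∈ (0, 1), η ∈ (0, 1), εH > 0, β ∈ (0, 1), x ∈ ℝⁿ with x > 0 componentwise, and d ∈ ℝⁿ, d ≠ 0, with ‖X⁻¹X̄d‖∞ ≤ β. Define g = X̄(∇f(x) − μX⁻¹e) and H = X̄(∇²f(x) + μX⁻²)X̄. Suppose that dᵀ(H + 2εH·I)d ≥ εH‖d‖² and that gᵀd = −γ·dᵀ(H + 2εH·I)d for some γ ≥ 1. Then for every α ∈ (0, 1]: if φ_μ(x + αX̄d) − φ_μ(x) ≥ −(η/6)·α³‖d‖³, then α² ≥ 6(1 − β)²·εH / (((L_H + η)(1 − β)² + (2 − β))·‖d‖). -/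

import Mathlib

open Matrix

/-- The Euclidean norm of a vector in `Fin n → ℝ`. -/
noncomputable def euclNorm {n : ℕ} (v : Fin n → ℝ) : ℝ := Real.sqrt (∑ i, (v i)^2)

/-- The operator norm (induced by the Euclidean norm) of a matrix. -/
noncomputable def opNorm {n : ℕ} (A : Matrix (Fin n) (Fin n) ℝ) : ℝ :=
  ‖Matrix.toEuclideanCLM (𝕜 := ℝ) A‖

/-- The continuous linear map `w ↦ ∑ i, v i * w i`. -/
noncomputable def dotCLM {n : ℕ} (v : Fin n → ℝ) : (Fin n → ℝ) →L[ℝ] ℝ :=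
  ∑ i, v i • (ContinuousLinearMap.proj i : (Fin n → ℝ) →L[ℝ] ℝ)

/-- The continuous linear map `w ↦ A *ᵥ w`. -/
noncomputable def mulVecCLM {n : ℕ} (A : Matrix (Fin n) (Fin n) ℝ) :
    (Fin n → ℝ) →L[ℝ] (Fin n → ℝ) :=
  LinearMap.toContinuousLinearMap A.mulVecLin

lemma dotCLM_apply {n : ℕ} (v w : Fin n → ℝ) : dotCLM v w = v ⬝ᵥ w := by
  simp [dotCLM, dotProduct, ContinuousLinearMap.sum_apply]

lemma mulVecCLM_apply {n : ℕ} (A : Matrix (Fin n) (Fin n) ℝ) (w : Fin n → ℝ) :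
    mulVecCLM A w = A *ᵥ w := rfl

lemma euclNorm_nonneg {n : ℕ} (v : Fin n → ℝ) : 0 ≤ euclNorm v := Real.sqrt_nonneg _

lemma euclNorm_sq {n : ℕ} (v : Fin n → ℝ) : euclNorm v ^ 2 = ∑ i, (v i)^2 := by
  rw [euclNorm, Real.sq_sqrt]
  positivity

lemma euclNorm_eq {n : ℕ} (v : Fin n → ℝ) :
    euclNorm v = ‖(WithLp.equiv 2 (Fin n → ℝ)).symm v‖ := by
  rw [EuclideanSpace.norm_eq]
  simp [euclNorm, sq_abs]

lemma abs_le_euclNorm {n : ℕ} (v : Fin n → ℝ) (i : Fin n) : |v i| ≤ euclNorm v := by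
  rw [euclNorm, ← Real.sqrt_sq_eq_abs]
  apply Real.sqrt_le_sqrt
  exact Finset.single_le_sum (f := fun j => (v j)^2) (fun j _ => sq_nonneg _) (Finset.mem_univ i)

lemma euclNorm_mono {n : ℕ} {v w : Fin n → ℝ} (h : ∀ i, |v i| ≤ |w i|) :
    euclNorm v ≤ euclNorm w := by
  apply Real.sqrt_le_sqrt
  apply Finset.sum_le_sum
  intro i _
  rw [← sq_abs (v i), ← sq_abs (w i)]
  exact pow_le_pow_left₀ (abs_nonneg _) (h i) 2

lemma dot_mulVec_le {n : ℕ} (A : Matrix (Fin n) (Fin n) ℝ) (v w : Fin n → ℝ) :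
    w ⬝ᵥ (A *ᵥ v) ≤ opNorm A * euclNorm v * euclNorm w := by
  have h1 : w ⬝ᵥ (A *ᵥ v)
      = inner ℝ ((WithLp.equiv 2 (Fin n → ℝ)).symm (A *ᵥ v))
          ((WithLp.equiv 2 (Fin n → ℝ)).symm w) := by
    rw [EuclideanSpace.inner_eq_star_dotProduct]
    simp [dotProduct, mul_comm]
  have h2 : ‖(WithLp.equiv 2 (Fin n → ℝ)).symm (A *ᵥ v)‖ ≤ opNorm A * euclNorm v := by
    have : (WithLp.equiv 2 (Fin n → ℝ)).symm (A *ᵥ v)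
        = Matrix.toEuclideanCLM (𝕜 := ℝ) A ((WithLp.equiv 2 (Fin n → ℝ)).symm v) := by
      rfl
    rw [this, euclNorm_eq v]
    exact (Matrix.toEuclideanCLM (𝕜 := ℝ) A).le_opNorm _
  rw [h1, euclNorm_eq w]
  calc inner ℝ ((WithLp.equiv 2 (Fin n → ℝ)).symm (A *ᵥ v))
          ((WithLp.equiv 2 (Fin n → ℝ)).symm w)
      ≤ ‖(WithLp.equiv 2 (Fin n → ℝ)).symm (A *ᵥ v)‖ * ‖(WithLp.equiv 2 (Fin n → ℝ)).symm w‖ :=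
        real_inner_le_norm _ _
    _ ≤ _ := by
        apply mul_le_mul_of_nonneg_right h2 (norm_nonneg _)

/-- If `F` has derivative `F'` on `[a,b]` and `F' ≤ 0` there, then `F b ≤ F a`. -/
lemma decr_helper {F F' : ℝ → ℝ} {a b : ℝ} (hab : a ≤ b)
    (hF : ∀ t ∈ Set.Icc a b, HasDerivAt F (F' t) t)
    (hF' : ∀ t ∈ Set.Icc a b, F' t ≤ 0) : F b ≤ F a := by
  rcases eq_or_lt_of_le hab with h | h
  · rw [h]
  have hanti : AntitoneOn F (Set.Icc a b) := by
    apply antitoneOn_of_deriv_nonpos (convex_Icc a b)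
    · exact fun t ht => (hF t ht).continuousAt.continuousWithinAt
    · intro t ht
      rw [interior_Icc] at ht
      exact ((hF t (Set.mem_Icc_of_Ioo ht)).differentiableAt).differentiableWithinAt
    · intro t ht
      rw [interior_Icc] at ht
      rw [(hF t (Set.mem_Icc_of_Ioo ht)).deriv]
      exact hF' t (Set.mem_Icc_of_Ioo ht)
  exact hanti (Set.left_mem_Icc.2 hab) (Set.right_mem_Icc.2 hab) hab

/-- Log lower-bound remainder: for `|s| ≤ β < 1`,
`-log(1+s) ≤ -s + s²/2 + |s|³/(3(1-β))`. -/
lemma log_remainder {β s : ℝ} (hβ0 : 0 ≤ β) (hβ1 : β < 1) (hs : |s| ≤ β) :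
    -Real.log (1 + s) ≤ -s + s^2/2 + |s|^3 / (3*(1-β)) := by
  have hβ' : 0 < 1 - β := by linarith
  have hsb : -β ≤ s ∧ s ≤ β := abs_le.1 hs
  rcases le_or_gt 0 s with hpos | hneg
  · -- s ≥ 0 : show log(1+s) ≥ s - s²/2, cubic term nonneg
    have key : s - s^2/2 ≤ Real.log (1 + s) := by
      have := decr_helper (F := fun t => t - t^2/2 - Real.log (1+t))
        (F' := fun t => 1 - t - 1/(1+t)) (a := 0) (b := s) hpos
        (fun t ht => by
          have h1t : 0 < 1 + t := by
            rcases ht with ⟨h1, _⟩; linarith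
          have := ((hasDerivAt_id t).sub (((hasDerivAt_id t).pow 2).div_const 2)).sub
            (((hasDerivAt_id t).const_add 1).log (ne_of_gt h1t))
          convert this using 1
          · rfl
          · rfl
          · funext r; simp only [id_eq, Pi.sub_apply, Pi.pow_apply]
          · simp only [id_eq]; norm_num)
        (fun t ht => by
          have h1t : 0 < 1 + t := by rcases ht with ⟨h1, _⟩; linarith
          show 1 - t - 1/(1+t) ≤ 0
          have h2 : 1 - t ≤ 1/(1+t) := by
            rw [le_div_iff₀ h1t]; nlinarith [sq_nonneg t]
          linarith)
      simpa using this
    have : 0 ≤ |s|^3 / (3*(1-β)) := by positivity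
    linarith
  · -- s < 0
    have h1s : 0 < 1 + s := by linarith [hsb.1]
    have habs : |s| = -s := abs_of_neg hneg
    rw [habs]
    -- G(u) = -log(1-u) - u - u²/2 - u³/(3(1-β)) is antitone on [0, β]
    have key := decr_helper (F := fun u => -Real.log (1-u) - u - u^2/2 - u^3/(3*(1-β)))
      (F' := fun u => 1/(1-u) - 1 - u - u^2/(1-β)) (a := 0) (b := -s) (by linarith)
      (fun u hu => by
        have h1u : 0 < 1 - u := by
          have : u ≤ β := by linarith [hsb.1, hu.2]
          linarith
        have hd1 : HasDerivAt (fun u : ℝ => -Real.log (1-u)) (1/(1-u)) u := by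
          have := ((((hasDerivAt_id u).neg).const_add 1).log (ne_of_gt h1u)).neg
          convert this using 1
          · rfl
          · rfl
          · funext r; simp only [Pi.neg_apply, id_eq, ← sub_eq_add_neg]
          simp only [id_eq, Pi.neg_apply]
          rw [show (1:ℝ) + -u = 1 - u by ring]
          ring
        have := (((hd1.sub (hasDerivAt_id u)).sub
          (((hasDerivAt_id u).pow 2).div_const 2)).sub
          (((hasDerivAt_id u).pow 3).div_const (3*(1-β))))
        convert this using 1
        · rfl
        · rfl
        · funext r; simp only [id_eq, Pi.sub_apply, Pi.pow_apply]
        simp only [id_eq]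
        field_simp
        ring)
      (fun u hu => by
        have hub : u ≤ β := by linarith [hsb.1, hu.2]
        have h1u : 0 < 1 - u := by linarith
        show 1/(1-u) - 1 - u - u^2/(1-β) ≤ 0
        have h2 : 1/(1-u) - 1 - u = u^2/(1-u) := by field_simp; ring
        have h3 : u^2/(1-u) ≤ u^2/(1-β) := by
          apply div_le_div_of_nonneg_left (sq_nonneg u) hβ'
          linarith
        linarith)
    have key2 : -Real.log (1-(-s)) - (-s) - (-s)^2/2 - (-s)^3/(3*(1-β)) ≤ 0 := by
      simpa using key
    rw [show (1 - -s) = 1 + s by ring] at key2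
    nlinarith [key2]

lemma euclNorm_smul {n : ℕ} (t : ℝ) (v : Fin n → ℝ) :
    euclNorm (t • v) = |t| * euclNorm v := by
  rw [euclNorm_eq, euclNorm_eq]
  have : (WithLp.equiv 2 (Fin n → ℝ)).symm (t • v)
      = t • (WithLp.equiv 2 (Fin n → ℝ)).symm v := rfl
  rw [this, norm_smul, Real.norm_eq_abs]

lemma taylor_cubic {n : ℕ} (f : (Fin n → ℝ) → ℝ)
    (gradf : (Fin n → ℝ) → (Fin n → ℝ))
    (hessf : (Fin n → ℝ) → Matrix (Fin n) (Fin n) ℝ)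
    (hgrad : ∀ y : Fin n → ℝ, HasFDerivAt f (dotCLM (gradf y)) y)
    (hhess : ∀ y : Fin n → ℝ, HasFDerivAt gradf (mulVecCLM (hessf y)) y)
    (L_H : ℝ)
    (hlip : ∀ y z : Fin n → ℝ, opNorm (hessf y - hessf z) ≤ L_H * euclNorm (y - z))
    (x v : Fin n → ℝ) :
    f (x + v) ≤ f x + v ⬝ᵥ gradf x + (1/2) * (v ⬝ᵥ (hessf x *ᵥ v))
      + L_H/6 * euclNorm v ^ 3 := by
  set ν := euclNorm v with hν
  have hν0 : 0 ≤ ν := euclNorm_nonneg v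
  set h₀ : ℝ := v ⬝ᵥ (hessf x *ᵥ v) with hh₀
  -- the line t ↦ x + t • v
  have hline : ∀ t : ℝ, HasDerivAt (fun s : ℝ => x + s • v) v t := by
    intro t
    have : HasDerivAt (fun s : ℝ => s • v) ((1:ℝ) • v) t := (hasDerivAt_id t).smul_const v
    simpa using this.const_add x
  set G : ℝ → ℝ := fun t => v ⬝ᵥ gradf (x + t • v) with hGdef
  have hG : ∀ t : ℝ, HasDerivAt G (v ⬝ᵥ (hessf (x + t • v) *ᵥ v)) t := by
    intro t
    have h1 : HasDerivAt (fun s : ℝ => gradf (x + s • v)) (mulVecCLM (hessf (x + t • v)) v) t :=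
      (hhess (x + t • v)).comp_hasDerivAt t (hline t)
    have h2 := (dotCLM v).hasFDerivAt.comp_hasDerivAt t h1
    have h3 : ∀ w, dotCLM v w = v ⬝ᵥ w := dotCLM_apply v
    simpa [hGdef, Function.comp_def, h3, mulVecCLM_apply] using h2
  have hF : ∀ t : ℝ, HasDerivAt (fun s : ℝ => f (x + s • v)) (G t) t := by
    intro t
    have h1 := (hgrad (x + t • v)).comp_hasDerivAt t (hline t)
    have : dotCLM (gradf (x + t • v)) v = G t := by
      rw [dotCLM_apply, hGdef]
      exact dotProduct_comm _ _
    rw [← this]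
    exact h1
  -- Step 1 : G t - G 0 - t h₀ ≤ L/2 t² ν³ on [0,1]
  have step1 : ∀ t ∈ Set.Icc (0:ℝ) 1, G t - G 0 - t * h₀ - L_H/2 * t^2 * ν^3 ≤ 0 := by
    intro t ht
    have := decr_helper (F := fun s => G s - G 0 - s * h₀ - L_H/2 * s^2 * ν^3)
      (F' := fun s => v ⬝ᵥ (hessf (x + s • v) *ᵥ v) - h₀ - L_H * s * ν^3)
      (a := 0) (b := t) ht.1
      (fun s _ => by
        have := (((hG s).sub_const (G 0)).sub ((hasDerivAt_id s).const_mul h₀)).sub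
          ((((hasDerivAt_id s).pow 2).const_mul (L_H/2)).mul_const (ν^3))
        convert this using 1
        · rfl
        · rfl
        · funext r; simp only [id_eq, Pi.sub_apply, Pi.pow_apply]; ring
        · simp only [id_eq, pow_one]; push_cast; ring)
      (fun s hs => by
        show v ⬝ᵥ (hessf (x + s • v) *ᵥ v) - h₀ - L_H * s * ν^3 ≤ 0
        have key : v ⬝ᵥ (hessf (x + s • v) *ᵥ v) - h₀ ≤ L_H * s * ν^3 := by
          have e1 : v ⬝ᵥ (hessf (x + s • v) *ᵥ v) - h₀
              = v ⬝ᵥ ((hessf (x + s • v) - hessf x) *ᵥ v) := by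
            rw [hh₀, Matrix.sub_mulVec, dotProduct_sub]
          rw [e1]
          calc v ⬝ᵥ ((hessf (x + s • v) - hessf x) *ᵥ v)
              ≤ opNorm (hessf (x + s • v) - hessf x) * euclNorm v * euclNorm v :=
                dot_mulVec_le _ _ _
            _ ≤ (L_H * euclNorm ((x + s • v) - x)) * ν * ν := by
                apply mul_le_mul_of_nonneg_right _ hν0
                exact mul_le_mul_of_nonneg_right (hlip _ _) hν0
            _ = L_H * s * ν^3 := by
                have : (x + s • v) - x = s • v := by abel
                rw [this, euclNorm_smul, abs_of_nonneg hs.1]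
                ring
        linarith)
    simpa using this
  -- Step 2
  have step2 := decr_helper
    (F := fun s => f (x + s • v) - f x - s * G 0 - s^2/2 * h₀ - L_H/6 * s^3 * ν^3)
    (F' := fun s => G s - G 0 - s * h₀ - L_H/2 * s^2 * ν^3)
    (a := 0) (b := 1) zero_le_one
    (fun s _ => by
      have := ((((hF s).sub_const (f x)).sub ((hasDerivAt_id s).const_mul (G 0))).sub
        ((((hasDerivAt_id s).pow 2).div_const 2).const_mul h₀)).sub
        ((((hasDerivAt_id s).pow 3).const_mul (L_H/6)).mul_const (ν^3))
      convert this using 1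
      · rfl
      · rfl
      · funext r; simp only [id_eq, Pi.sub_apply, Pi.pow_apply]; ring
      · simp only [id_eq, pow_one]; push_cast; ring)
    step1
  have hG0 : G 0 = v ⬝ᵥ gradf x := by simp [hGdef]
  simp only [one_smul, zero_smul, add_zero, one_pow, one_mul] at step2
  rw [hG0] at step2
  linarith [step2]

set_option maxHeartbeats 2000000 in
/-- with `f` twice continuously differentiable, Hessian `L_H`-Lipschitz in
operator norm, `μ, η ∈ (0,1)`, `εH > 0`, `β ∈ (0,1)`, `x > 0`, `d ≠ 0` with
`‖X⁻¹X̄d‖∞ ≤ β`, `g = X̄(∇f(x) − μX⁻¹e)`, `H = X̄(∇²f(x) + μX⁻²)X̄`, and suppose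
`dᵀ(H + 2εH I)d ≥ εH‖d‖²` and `gᵀd = −γ dᵀ(H + 2εH I)d` for some `γ ≥ 1`. Then for
every `α ∈ (0,1]`: if `φ_μ(x + αX̄d) − φ_μ(x) ≥ −(η/6)α³‖d‖³` then
`α² ≥ 6(1−β)² εH / (((L_H + η)(1−β)² + (2−β)) ‖d‖)`. -/
theorem stmt11 {n : ℕ}
    (f : (Fin n → ℝ) → ℝ)
    (gradf : (Fin n → ℝ) → (Fin n → ℝ))
    (hessf : (Fin n → ℝ) → Matrix (Fin n) (Fin n) ℝ)
    (hgrad : ∀ y : Fin n → ℝ, HasFDerivAt f (dotCLM (gradf y)) y)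
    (hhess : ∀ y : Fin n → ℝ, HasFDerivAt gradf (mulVecCLM (hessf y)) y)
    (hhesscont : Continuous hessf)
    (L_H : ℝ) (hLH : 0 ≤ L_H)
    (hlip : ∀ y z : Fin n → ℝ, opNorm (hessf y - hessf z) ≤ L_H * euclNorm (y - z))
    (μ : ℝ) (hμ : μ ∈ Set.Ioo (0:ℝ) 1)
    (η : ℝ) (hη : η ∈ Set.Ioo (0:ℝ) 1)
    (εH : ℝ) (hεH : 0 < εH)
    (β : ℝ) (hβ : β ∈ Set.Ioo (0:ℝ) 1)
    (x : Fin n → ℝ) (hx : ∀ i, 0 < x i)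
    (d : Fin n → ℝ) (hdne : d ≠ 0)
    (hd : ‖(fun i => (min (x i) 1 / x i) * d i : Fin n → ℝ)‖ ≤ β)
    (g : Fin n → ℝ)
    (hg : g = fun i => min (x i) 1 * (gradf x i - μ / x i))
    (H : Matrix (Fin n) (Fin n) ℝ)
    (hH : H = Matrix.diagonal (fun i => min (x i) 1)
        * (hessf x + μ • Matrix.diagonal (fun i => ((x i)^2)⁻¹))
        * Matrix.diagonal (fun i => min (x i) 1))
    (hcurv : εH * euclNorm d ^ 2
      ≤ d ⬝ᵥ ((H + (2 * εH) • (1 : Matrix (Fin n) (Fin n) ℝ)) *ᵥ d))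
    (γ : ℝ) (hγ : 1 ≤ γ)
    (hgd : g ⬝ᵥ d = -γ * (d ⬝ᵥ ((H + (2 * εH) • (1 : Matrix (Fin n) (Fin n) ℝ)) *ᵥ d))) :
    ∀ α ∈ Set.Ioc (0:ℝ) 1,
      (f (x + α • (fun i => min (x i) 1 * d i : Fin n → ℝ))
          - μ * ∑ i, Real.log ((x + α • (fun i => min (x i) 1 * d i : Fin n → ℝ)) i)
        - (f x - μ * ∑ i, Real.log (x i))
        ≥ -(η/6) * α^3 * euclNorm d ^ 3) →
      6 * (1-β)^2 * εH / (((L_H + η) * (1-β)^2 + (2-β)) * euclNorm d) ≤ α^2 := by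
  intro α hα hφ
  obtain ⟨hα0, hα1⟩ := hα
  obtain ⟨hμ0, hμ1⟩ := hμ
  obtain ⟨hη0, hη1⟩ := hη
  obtain ⟨hβ0, hβ1⟩ := hβ
  set db : Fin n → ℝ := fun i => min (x i) 1 * d i with hdb
  set tv : Fin n → ℝ := fun i => (min (x i) 1 / x i) * d i with htv
  set ν := euclNorm d with hνdef
  have hxbpos : ∀ i, 0 < min (x i) 1 := fun i => lt_min (hx i) one_pos
  have hν0 : 0 < ν := by
    obtain ⟨i, hi⟩ := Function.ne_iff.1 hdne
    exact lt_of_lt_of_le (abs_pos.2 hi) (abs_le_euclNorm d i)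
  have htb : ∀ i, |tv i| ≤ β := by
    intro i
    rw [← Real.norm_eq_abs]
    exact (norm_le_pi_norm tv i).trans hd
  have htd : ∀ i, |tv i| ≤ |d i| := by
    intro i
    rw [htv]
    simp only [abs_mul]
    have h1 : |min (x i) 1 / x i| ≤ 1 := by
      rw [abs_div, abs_of_pos (hx i), abs_of_pos (hxbpos i), div_le_one (hx i)]
      exact min_le_left _ _
    nlinarith [abs_nonneg (d i)]
  have hdbd : ∀ i, |db i| ≤ |d i| := by
    intro i
    rw [hdb]
    simp only [abs_mul]
    have h1 : |min (x i) 1| ≤ 1 := by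
      rw [abs_of_pos (hxbpos i)]; exact min_le_right _ _
    nlinarith [abs_nonneg (d i)]
  have hdbν : euclNorm db ≤ ν := euclNorm_mono hdbd
  -- dot product identities
  have hg_dot : g ⬝ᵥ d = db ⬝ᵥ gradf x - μ * ∑ i, tv i := by
    rw [hg]
    simp only [dotProduct, hdb, htv]
    rw [Finset.mul_sum, ← Finset.sum_sub_distrib]
    apply Finset.sum_congr rfl
    intro i _
    have hxne : x i ≠ 0 := ne_of_gt (hx i)
    field_simp
  have hdiag : (Matrix.diagonal (fun i => min (x i) 1)) *ᵥ d = db := by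
    ext i; rw [Matrix.mulVec_diagonal]
  have hdHd : d ⬝ᵥ (H *ᵥ d) = db ⬝ᵥ (hessf x *ᵥ db) + μ * ∑ i, (tv i)^2 := by
    rw [hH, ← Matrix.mulVec_mulVec, ← Matrix.mulVec_mulVec, hdiag]
    have h2 : ∀ w : Fin n → ℝ,
        d ⬝ᵥ ((Matrix.diagonal (fun i => min (x i) 1)) *ᵥ w) = db ⬝ᵥ w := by
      intro w
      simp only [dotProduct, Matrix.mulVec_diagonal, hdb]
      exact Finset.sum_congr rfl (fun i _ => by ring)
    rw [h2, Matrix.add_mulVec, dotProduct_add, Matrix.smul_mulVec, dotProduct_smul]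
    congr 1
    rw [smul_eq_mul]
    congr 1
    simp only [dotProduct, Matrix.mulVec_diagonal, hdb, htv]
    apply Finset.sum_congr rfl
    intro i _
    have hxne : x i ≠ 0 := ne_of_gt (hx i)
    field_simp
  have hdd : d ⬝ᵥ d = ν^2 := by
    rw [euclNorm_sq]
    simp [dotProduct, sq]
  have hQ : d ⬝ᵥ ((H + (2*εH) • (1 : Matrix (Fin n) (Fin n) ℝ)) *ᵥ d)
      = db ⬝ᵥ (hessf x *ᵥ db) + μ * ∑ i, (tv i)^2 + 2*εH*ν^2 := by
    rw [Matrix.add_mulVec, dotProduct_add, Matrix.smul_mulVec, Matrix.one_mulVec,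
      dotProduct_smul, smul_eq_mul, hdd, hdHd]
  -- cubic sum bound
  have hS3nonneg : (0:ℝ) ≤ ∑ i, |tv i|^3 := by positivity
  have hS3 : ∑ i, |tv i|^3 ≤ ν^3 := by
    calc ∑ i, |tv i|^3 ≤ ∑ i, (d i)^2 * ν := by
          apply Finset.sum_le_sum
          intro i _
          have h1 := htd i
          have h2 := abs_le_euclNorm d i
          have h3 : |d i|^2 = (d i)^2 := sq_abs _
          calc |tv i|^3 ≤ |d i|^3 := pow_le_pow_left₀ (abs_nonneg _) h1 3
            _ = |d i|^2 * |d i| := by ring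
            _ ≤ |d i|^2 * ν := mul_le_mul_of_nonneg_left h2 (by positivity)
            _ = (d i)^2 * ν := by rw [h3]
      _ = ν^3 := by rw [← Finset.sum_mul, ← euclNorm_sq]; ring
  -- barrier split
  have hpos1 : ∀ i, 0 < 1 + α * tv i := by
    intro i
    have h1 : |α * tv i| ≤ β := by
      rw [abs_mul, abs_of_pos hα0]
      calc α * |tv i| ≤ 1 * β := by
            apply mul_le_mul hα1 (htb i) (abs_nonneg _) zero_le_one
        _ = β := one_mul β
    have := (abs_le.1 h1).1
    linarith
  have hbar : ∑ i, Real.log ((x + α • db) i)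
      = ∑ i, Real.log (x i) + ∑ i, Real.log (1 + α * tv i) := by
    rw [← Finset.sum_add_distrib]
    apply Finset.sum_congr rfl
    intro i _
    have hxne : x i ≠ 0 := ne_of_gt (hx i)
    have hxaid : (x + α • db) i = x i * (1 + α * tv i) := by
      simp only [Pi.add_apply, Pi.smul_apply, smul_eq_mul, hdb, htv]
      field_simp
    rw [hxaid, Real.log_mul hxne (ne_of_gt (hpos1 i))]
  have hbar2 : -∑ i, Real.log (1 + α * tv i)
      ≤ -(α * ∑ i, tv i) + α^2/2 * ∑ i, (tv i)^2
        + α^3/(3*(1-β)) * ∑ i, |tv i|^3 := by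
    have h1 : ∀ i ∈ Finset.univ, -Real.log (1 + α * tv i)
        ≤ -(α * tv i) + (α * tv i)^2/2 + α^3 * |tv i|^3 / (3*(1-β)) := by
      intro i _
      have h2 : |α * tv i| ≤ β := by
        rw [abs_mul, abs_of_pos hα0]
        calc α * |tv i| ≤ 1 * β := by
              apply mul_le_mul hα1 (htb i) (abs_nonneg _) zero_le_one
          _ = β := one_mul β
      have h3 := log_remainder hβ0.le hβ1 h2
      have h4 : |α * tv i|^3 = α^3 * |tv i|^3 := by
        rw [abs_mul, abs_of_pos hα0, mul_pow]
      rw [h4] at h3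
      exact h3
    have eS1 : ∑ i, (α * tv i) = α * ∑ i, tv i := by
      rw [Finset.mul_sum]
    have eS2 : ∑ i, ((α * tv i)^2/2) = α^2/2 * ∑ i, (tv i)^2 := by
      rw [Finset.mul_sum]
      exact Finset.sum_congr rfl (fun i _ => by ring)
    have eS3e : ∑ i, (α^3 * |tv i|^3/(3*(1-β))) = α^3/(3*(1-β)) * ∑ i, |tv i|^3 := by
      rw [Finset.mul_sum]
      exact Finset.sum_congr rfl (fun i _ => by ring)
    calc -∑ i, Real.log (1 + α * tv i) = ∑ i, -Real.log (1 + α * tv i) := by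
          rw [Finset.sum_neg_distrib]
      _ ≤ ∑ i, (-(α * tv i) + (α * tv i)^2/2 + α^3 * |tv i|^3 / (3*(1-β))) :=
          Finset.sum_le_sum h1
      _ = -(α * ∑ i, tv i) + α^2/2 * ∑ i, (tv i)^2 + α^3/(3*(1-β)) * ∑ i, |tv i|^3 := by
          rw [Finset.sum_add_distrib, Finset.sum_add_distrib, Finset.sum_neg_distrib,
            eS1, eS2, eS3e]
  -- Taylor bound
  have htay := taylor_cubic f gradf hessf hgrad hhess L_H hlip x (α • db)
  have htay2 : f (x + α • db) ≤ f x + α * (db ⬝ᵥ gradf x)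
      + α^2/2 * (db ⬝ᵥ (hessf x *ᵥ db)) + L_H/6 * α^3 * ν^3 := by
    have e1 : (α • db) ⬝ᵥ gradf x = α * (db ⬝ᵥ gradf x) := by
      rw [smul_dotProduct, smul_eq_mul]
    have e2 : (α • db) ⬝ᵥ (hessf x *ᵥ (α • db)) = α^2 * (db ⬝ᵥ (hessf x *ᵥ db)) := by
      rw [Matrix.mulVec_smul, smul_dotProduct, dotProduct_smul, smul_eq_mul, smul_eq_mul]
      ring
    have e3 : euclNorm (α • db) ≤ α * ν := by
      rw [euclNorm_smul, abs_of_pos hα0]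
      exact mul_le_mul_of_nonneg_left hdbν hα0.le
    have e4 : euclNorm (α • db) ^ 3 ≤ (α * ν)^3 := by
      apply pow_le_pow_left₀ (euclNorm_nonneg _) e3
    have e5 : L_H/6 * euclNorm (α • db) ^ 3 ≤ L_H/6 * α^3 * ν^3 := by
      calc L_H/6 * euclNorm (α • db) ^ 3 ≤ L_H/6 * (α*ν)^3 := by
            apply mul_le_mul_of_nonneg_left e4 (by linarith)
        _ = L_H/6 * α^3 * ν^3 := by ring
    rw [e1, e2] at htay
    linarith
  -- assemble
  set S1 := ∑ i, tv i with hS1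
  set S2 := ∑ i, (tv i)^2 with hS2def
  set S3 := ∑ i, |tv i|^3 with hS3def
  set hd2 := db ⬝ᵥ (hessf x *ᵥ db) with hhd2
  set G1 := db ⬝ᵥ gradf x with hG1
  set Q := d ⬝ᵥ ((H + (2*εH) • (1 : Matrix (Fin n) (Fin n) ℝ)) *ᵥ d) with hQdef
  -- φdiff upper bound
  have hφupper : f (x + α • db) - μ * ∑ i, Real.log ((x + α • db) i)
      - (f x - μ * ∑ i, Real.log (x i))
      ≤ α * G1 + α^2/2 * hd2 + L_H/6 * α^3 * ν^3
        + μ * (-(α * S1) + α^2/2 * S2 + α^3/(3*(1-β)) * S3) := by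
    rw [hbar]
    have h1 : -(μ * ∑ i, Real.log (1 + α * tv i))
        ≤ μ * (-(α * S1) + α^2/2 * S2 + α^3/(3*(1-β)) * S3) := by
      rw [← mul_neg μ]
      exact mul_le_mul_of_nonneg_left hbar2 hμ0.le
    linarith [htay2, h1]
  -- key inequality
  have hcurv' : εH * ν^2 ≤ Q := hcurv
  have hγQ : α * (G1 - μ * S1) + α^2/2 * (hd2 + μ * S2)
      ≤ -(α - α^2/2) * (εH * ν^2) - α^2 * εH * ν^2 := by
    have h1 : G1 - μ * S1 = -γ * Q := by rw [← hg_dot]; exact hgd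
    have h2 : hd2 + μ * S2 = Q - 2*εH*ν^2 := by rw [hQ]; ring
    rw [h1, h2]
    have hαα : 0 < α - α^2/2 := by nlinarith
    have hQ0 : 0 < Q := lt_of_lt_of_le (by positivity) hcurv'
    -- -αγQ + α²/2 (Q - 2εHν²) ≤ -(α-α²/2) Q - α² εH ν² ≤ -(α-α²/2) εHν² - α²εHν²
    have hprod : 0 ≤ (γ - 1) * (α * Q) :=
      mul_nonneg (by linarith) (mul_nonneg hα0.le hQ0.le)
    have h3 : α * (-γ * Q) + α^2/2 * (Q - 2*εH*ν^2)
        ≤ -(α - α^2/2) * Q - α^2 * εH * ν^2 := by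
      nlinarith [hprod]
    have h4 : -(α - α^2/2) * Q ≤ -(α - α^2/2) * (εH * ν^2) := by
      rw [neg_mul, neg_mul, neg_le_neg_iff]
      exact mul_le_mul_of_nonneg_left hcurv' hαα.le
    linarith
  have hS3' : μ * (α^3/(3*(1-β)) * S3) ≤ μ/(3*(1-β)) * α^3 * ν^3 := by
    have h1 : α^3/(3*(1-β)) * S3 ≤ α^3/(3*(1-β)) * ν^3 :=
      mul_le_mul_of_nonneg_left hS3 (div_nonneg (by positivity) (by linarith))
    calc μ * (α^3/(3*(1-β)) * S3) ≤ μ * (α^3/(3*(1-β)) * ν^3) :=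
          mul_le_mul_of_nonneg_left h1 hμ0.le
      _ = μ/(3*(1-β)) * α^3 * ν^3 := by ring
  -- combine with hφ
  have hmain : εH * ν^2 * (α + α^2/2)
      ≤ ((L_H + η)/6 + μ/(3*(1-β))) * α^3 * ν^3 := by
    have hU2 : α * G1 + α^2/2 * hd2 + L_H/6 * α^3 * ν^3
        + μ * (-(α * S1) + α^2/2 * S2 + α^3/(3*(1-β)) * S3)
        = (α * (G1 - μ * S1) + α^2/2 * (hd2 + μ * S2)) + L_H/6 * α^3 * ν^3
          + μ * (α^3/(3*(1-β)) * S3) := by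
      ring
    have step_a : -(η/6) * α^3 * ν^3
        ≤ (α * (G1 - μ * S1) + α^2/2 * (hd2 + μ * S2)) + L_H/6 * α^3 * ν^3
          + μ * (α^3/(3*(1-β)) * S3) := by
      rw [← hU2]; linarith [hφ, hφupper]
    have step_b : -(η/6) * α^3 * ν^3
        ≤ -(α - α^2/2) * (εH * ν^2) - α^2 * εH * ν^2 + L_H/6 * α^3 * ν^3
          + μ/(3*(1-β)) * α^3 * ν^3 := by
      linarith [step_a, hγQ, hS3']
    have e6 : -(α-α^2/2)*(εH*ν^2) - α^2*εH*ν^2 = -(εH*ν^2*(α+α^2/2)) := by ring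
    have e7 : ((L_H+η)/6 + μ/(3*(1-β)))*α^3*ν^3
        = L_H/6*α^3*ν^3 + η/6*α^3*ν^3 + μ/(3*(1-β))*α^3*ν^3 := by ring
    have e8 : -(η/6) * α^3 * ν^3 = -(η/6*α^3*ν^3) := by ring
    linarith [step_b, e6, e7, e8]
  -- divide by α ν²
  set C := (L_H + η)/6 + μ/(3*(1-β)) with hC
  have hC0 : 0 < C := by
    have h1 : 0 < μ/(3*(1-β)) := div_pos hμ0 (by linarith)
    have h2 : 0 ≤ (L_H + η)/6 := by linarith
    rw [hC]; linarith
  have hdiv : εH * (1 + α/2) ≤ C * α^2 * ν := by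
    have h1 : εH * (1 + α/2) * (α * ν^2) ≤ (C * α^2 * ν) * (α * ν^2) := by
      have e1 : εH * (1 + α/2) * (α * ν^2) = εH * ν^2 * (α + α^2/2) := by ring
      have e2 : (C * α^2 * ν) * (α * ν^2) = C * α^3 * ν^3 := by ring
      rw [e1, e2]
      exact hmain
    exact le_of_mul_le_mul_right h1 (by positivity)
  -- finish
  have hD0 : 0 < ((L_H + η) * (1-β)^2 + (2-β)) * ν := by
    have h1 : 0 < (L_H + η) * (1-β)^2 + (2-β) := by nlinarith [sq_nonneg (1-β)]
    positivity
  rw [div_le_iff₀ hD0]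
  have hνnn : 0 ≤ ν := hν0.le
  clear_value ν C
  have hεHC : εH ≤ C * α^2 * ν := by
    have h1 : 0 ≤ εH * (α/2) := by positivity
    linarith only [hdiv, h1]
  have hCD : 6 * (1-β)^2 * C ≤ (L_H + η) * (1-β)^2 + (2-β) := by
    rw [hC]
    have hne : (1:ℝ) - β ≠ 0 := ne_of_gt (by linarith)
    have h1 : 6 * (1-β)^2 * (μ/(3*(1-β))) = 2 * μ * (1-β) := by
      field_simp
      ring
    have h2 : μ * (1-β) ≤ 1 * (1-β) :=
      mul_le_mul_of_nonneg_right hμ1.le (by linarith)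
    have h3 : 6 * (1-β)^2 * ((L_H + η)/6 + μ/(3*(1-β)))
        = (L_H + η) * (1-β)^2 + 6 * (1-β)^2 * (μ/(3*(1-β))) := by ring
    rw [h3, h1]
    linarith
  have f1 : 6*(1-β)^2*εH ≤ 6*(1-β)^2*(C*α^2*ν) :=
    mul_le_mul_of_nonneg_left hεHC (by positivity)
  have f2 : 6*(1-β)^2*(C*α^2*ν) = (6*(1-β)^2*C)*(α^2*ν) := by ring
  have f3 : (6*(1-β)^2*C)*(α^2*ν) ≤ ((L_H+η)*(1-β)^2+(2-β))*(α^2*ν) :=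
    mul_le_mul_of_nonneg_right hCD (mul_nonneg (sq_nonneg α) hνnn)
  have f4 : ((L_H+η)*(1-β)^2+(2-β))*(α^2*ν)
      = α^2*(((L_H+η)*(1-β)^2+(2-β))*ν) := by ring
  linarith [f1, f2, f3, f4]
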